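/- Let p be a prime and let F(z) = ∑_{n≥1} f(n) z^n ∈ ℚ[[z]] be algebraic over ℚ(z). If for every real ρ with 0 < ρ < 1 the sequence |f(n)|_p · ρ^n tends to 0 as n → ∞ (i.e., F converges p-adically on the open unit disk), then the sequence |f(n)|_p is uniformly bounded: there exists a constant C such that |f(n)|_p ≤ C for all n ≥ 1. -/

import Mathlib

open Filter PowerSeries

section Aux
variable {p : ℕ} [hp : Fact p.Prime]

lemma padic_pos_of_ne {q : ℚ} (h : q ≠ 0) : (0:ℝ) < (padicNorm p q : ℝ) := by
  have h1 : (0:ℚ) ≤ padicNorm p q := padicNorm.nonneg q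
  have h2 : padicNorm p q ≠ 0 := fun hh => h (padicNorm.zero_of_padicNorm_eq_zero hh)
  exact_mod_cast lt_of_le_of_ne h1 (Ne.symm h2)

lemma padic_nonarch' (a b : ℚ) :
    (padicNorm p (a + b) : ℝ) ≤ max (padicNorm p a : ℝ) (padicNorm p b : ℝ) := by
  have := padicNorm.nonarchimedean (p := p) (q := a) (r := b)
  exact_mod_cast this

lemma padic_sum_lt {ι : Type*} (s : Finset ι) (F : ι → ℚ) {c : ℝ} (hc : 0 < c)
    (h : ∀ x ∈ s, (padicNorm p (F x) : ℝ) < c) :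
    (padicNorm p (∑ x ∈ s, F x) : ℝ) < c := by
  induction s using Finset.cons_induction with
  | empty => simpa [padicNorm.zero] using hc
  | cons a s ha ih =>
      rw [Finset.sum_cons]
      refine lt_of_le_of_lt (padic_nonarch' _ _) ?_
      rw [max_lt_iff]
      exact ⟨h a (Finset.mem_cons_self _ _), ih fun x hx => h x (Finset.mem_cons_of_mem hx)⟩

lemma padic_sum_le {ι : Type*} (s : Finset ι) (F : ι → ℚ) {c : ℝ} (hc : 0 ≤ c)
    (h : ∀ x ∈ s, (padicNorm p (F x) : ℝ) ≤ c) :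
    (padicNorm p (∑ x ∈ s, F x) : ℝ) ≤ c := by
  induction s using Finset.cons_induction with
  | empty => simpa [padicNorm.zero] using hc
  | cons a s ha ih =>
      rw [Finset.sum_cons]
      refine le_trans (padic_nonarch' _ _) ?_
      rw [max_le_iff]
      exact ⟨h a (Finset.mem_cons_self _ _), ih fun x hx => h x (Finset.mem_cons_of_mem hx)⟩

lemma padic_add_eq_of_lt {a b : ℚ} (h : (padicNorm p b : ℝ) < (padicNorm p a : ℝ)) :
    padicNorm p (a + b) = padicNorm p a := by
  have h' : padicNorm p b < padicNorm p a := by exact_mod_cast h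
  rw [add_comm, padicNorm.add_eq_max_of_ne (ne_of_lt h'), max_eq_right h'.le]

lemma padic_sum_dominant {ι : Type*} [DecidableEq ι] (s : Finset ι) (F : ι → ℚ) {x0 : ι} (hx0 : x0 ∈ s)
    (h : ∀ x ∈ s, x ≠ x0 → (padicNorm p (F x) : ℝ) < (padicNorm p (F x0) : ℝ)) :
    padicNorm p (∑ x ∈ s, F x) = padicNorm p (F x0) := by
  rw [← Finset.add_sum_erase s F hx0]
  rcases (s.erase x0).eq_empty_or_nonempty with he | ⟨y, hy⟩
  · rw [he, Finset.sum_empty, add_zero]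
  · have hc : (0:ℝ) < (padicNorm p (F x0) : ℝ) := by
      refine lt_of_le_of_lt ?_ (h y (Finset.mem_of_mem_erase hy) (Finset.ne_of_mem_erase hy))
      exact_mod_cast padicNorm.nonneg (F y)
    refine padic_add_eq_of_lt ?_
    exact padic_sum_lt _ _ hc fun x hx =>
      h x (Finset.mem_of_mem_erase hx) (Finset.ne_of_mem_erase hx)

lemma exists_argmax_min (t : ℕ → ℝ) (h0 : ∀ n, 0 ≤ t n)
    (hlim : Tendsto t atTop (nhds 0)) (hpos : ∃ n, 0 < t n) :
    ∃ m, (∀ n, t n ≤ t m) ∧ ∀ k < m, t k < t m := by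
  classical
  obtain ⟨n0, hn0⟩ := hpos
  have ev : ∀ᶠ n in atTop, t n < t n0 := hlim.eventually_lt_const hn0
  obtain ⟨N, hN⟩ := eventually_atTop.1 ev
  have hmem : n0 ∈ Finset.range (N + n0 + 1) := by
    simp only [Finset.mem_range]; omega
  obtain ⟨b, hb, hbmax⟩ := Finset.exists_max_image (Finset.range (N + n0 + 1)) t ⟨n0, hmem⟩
  have hQ : ∃ m, ∀ n, t n ≤ t m := by
    refine ⟨b, fun n => ?_⟩
    by_cases hn : n ∈ Finset.range (N + n0 + 1)
    · exact hbmax n hn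
    · have : N ≤ n := by simp only [Finset.mem_range] at hn; omega
      exact le_trans (hN n this).le (hbmax n0 hmem)
  refine ⟨Nat.find hQ, Nat.find_spec hQ, fun k hk => ?_⟩
  have := Nat.find_min hQ hk
  push_neg at this
  obtain ⟨n, hn⟩ := this
  exact lt_of_lt_of_le hn (Nat.find_spec hQ n)


/-- `G` has ρ-Gauss norm `A`, attained first at index `m`. -/
def IsG (p : ℕ) (ρ : ℝ) (G : PowerSeries ℚ) (A : ℝ) (m : ℕ) : Prop :=
  (∀ n, (padicNorm p (PowerSeries.coeff n G) : ℝ) * ρ ^ n ≤ A) ∧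
  (padicNorm p (PowerSeries.coeff m G) : ℝ) * ρ ^ m = A ∧
  ∀ k < m, (padicNorm p (PowerSeries.coeff k G) : ℝ) * ρ ^ k < A

lemma isG_one {ρ : ℝ} (hρ : 0 < ρ) : IsG p ρ 1 1 0 := by
  refine ⟨fun n => ?_, by simp [PowerSeries.coeff_one, padicNorm.one], fun k hk => absurd hk (Nat.not_lt_zero k)⟩
  rcases Nat.eq_zero_or_pos n with h | h
  · simp [h, PowerSeries.coeff_one, padicNorm.one]
  · have hn : n ≠ 0 := Nat.pos_iff_ne_zero.1 h
    simp [PowerSeries.coeff_one, hn, padicNorm.zero]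

lemma isG_mul {ρ A B : ℝ} {G H : PowerSeries ℚ} {m k : ℕ}
    (hρ : 0 < ρ) (hA : 0 < A) (hB : 0 < B)
    (hG : IsG p ρ G A m) (hH : IsG p ρ H B k) :
    IsG p ρ (G * H) (A * B) (m + k) := by
  obtain ⟨hGu, hGe, hGm⟩ := hG
  obtain ⟨hHu, hHe, hHm⟩ := hH
  have hρn : ∀ n : ℕ, (0:ℝ) < ρ ^ n := fun n => pow_pos hρ n
  have gle : ∀ i, (padicNorm p (coeff i G) : ℝ) ≤ A / ρ ^ i := fun i =>
    (le_div_iff₀ (hρn i)).2 (hGu i)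
  have hle : ∀ j, (padicNorm p (coeff j H) : ℝ) ≤ B / ρ ^ j := fun j =>
    (le_div_iff₀ (hρn j)).2 (hHu j)
  have glt : ∀ i < m, (padicNorm p (coeff i G) : ℝ) < A / ρ ^ i := fun i hi =>
    (lt_div_iff₀ (hρn i)).2 (hGm i hi)
  have hlt : ∀ j < k, (padicNorm p (coeff j H) : ℝ) < B / ρ ^ j := fun j hj =>
    (lt_div_iff₀ (hρn j)).2 (hHm j hj)
  have nneg : ∀ q : ℚ, (0:ℝ) ≤ (padicNorm p q : ℝ) := fun q => by
    exact_mod_cast padicNorm.nonneg q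
  have tsplit : ∀ i j : ℕ, (padicNorm p (coeff i G * coeff j H) : ℝ) =
      (padicNorm p (coeff i G) : ℝ) * (padicNorm p (coeff j H) : ℝ) := by
    intro i j
    rw [padicNorm.mul, Rat.cast_mul]
  have hsplitρ : ∀ i j : ℕ, A * B / ρ ^ (i + j) = (A / ρ ^ i) * (B / ρ ^ j) := by
    intro i j; rw [div_mul_div_comm, ← pow_add]
  have term_le : ∀ i j : ℕ,
      (padicNorm p (coeff i G * coeff j H) : ℝ) ≤ A * B / ρ ^ (i + j) := by
    intro i j
    rw [tsplit, hsplitρ]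
    exact mul_le_mul (gle i) (hle j) (nneg _) (div_nonneg hA.le (hρn i).le)
  have term_lt : ∀ i j : ℕ, (i < m ∨ j < k) →
      (padicNorm p (coeff i G * coeff j H) : ℝ) < A * B / ρ ^ (i + j) := by
    intro i j hij
    rw [tsplit, hsplitρ]
    rcases hij with hi | hj
    · calc (padicNorm p (coeff i G) : ℝ) * (padicNorm p (coeff j H) : ℝ)
          ≤ (padicNorm p (coeff i G) : ℝ) * (B / ρ ^ j) :=
            mul_le_mul_of_nonneg_left (hle j) (nneg _)
        _ < (A / ρ ^ i) * (B / ρ ^ j) :=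
            mul_lt_mul_of_pos_right (glt i hi) (div_pos hB (hρn j))
    · calc (padicNorm p (coeff i G) : ℝ) * (padicNorm p (coeff j H) : ℝ)
          ≤ (A / ρ ^ i) * (padicNorm p (coeff j H) : ℝ) :=
            mul_le_mul_of_nonneg_right (gle i) (nneg _)
        _ < (A / ρ ^ i) * (B / ρ ^ j) :=
            mul_lt_mul_of_pos_left (hlt j hj) (div_pos hA (hρn i))
  refine ⟨fun n => ?_, ?_, fun n hn => ?_⟩
  · have : (padicNorm p (coeff n (G * H)) : ℝ) ≤ A * B / ρ ^ n := by
      rw [PowerSeries.coeff_mul]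
      refine padic_sum_le _ _ (div_nonneg (mul_nonneg hA.le hB.le) (hρn n).le) ?_
      intro x hx
      have hxn : x.1 + x.2 = n := Finset.HasAntidiagonal.mem_antidiagonal.1 hx
      have := term_le x.1 x.2
      rwa [hxn] at this
    exact (le_div_iff₀ (hρn n)).1 this
  · have hval : (padicNorm p (coeff m G * coeff k H) : ℝ) = A * B / ρ ^ (m + k) := by
      rw [tsplit, hsplitρ]
      have h1 : (padicNorm p (coeff m G) : ℝ) = A / ρ ^ m :=
        eq_div_iff (ne_of_gt (hρn m)) |>.2 hGe
      have h2 : (padicNorm p (coeff k H) : ℝ) = B / ρ ^ k :=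
        eq_div_iff (ne_of_gt (hρn k)) |>.2 hHe
      rw [h1, h2]
    have hdom : padicNorm p (coeff (m + k) (G * H)) =
        padicNorm p (coeff m G * coeff k H) := by
      rw [PowerSeries.coeff_mul]
      refine padic_sum_dominant _ _ (x0 := ((m : ℕ), (k : ℕ)))
        (Finset.HasAntidiagonal.mem_antidiagonal.2 rfl) ?_
      intro x hx hne
      have hxn : x.1 + x.2 = m + k := Finset.HasAntidiagonal.mem_antidiagonal.1 hx
      have hor : x.1 < m ∨ x.2 < k := by
        by_contra hcon
        push_neg at hcon
        have e1 : x.1 = m := by omega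
        have e2 : x.2 = k := by omega
        exact hne (Prod.ext_iff.2 ⟨e1, e2⟩)
      have := term_lt x.1 x.2 hor
      rw [hxn] at this
      rw [hval]
      exact this
    rw [hdom, hval, div_mul_cancel₀ _ (ne_of_gt (hρn (m + k)))]
  · have : (padicNorm p (coeff n (G * H)) : ℝ) < A * B / ρ ^ n := by
      rw [PowerSeries.coeff_mul]
      refine padic_sum_lt _ _ (div_pos (mul_pos hA hB) (hρn n)) ?_
      intro x hx
      have hxn : x.1 + x.2 = n := Finset.HasAntidiagonal.mem_antidiagonal.1 hx
      have hor : x.1 < m ∨ x.2 < k := by omega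
      have := term_lt x.1 x.2 hor
      rwa [hxn] at this
    exact (lt_div_iff₀ (hρn n)).1 this

lemma isG_pow {ρ A : ℝ} {G : PowerSeries ℚ} {m : ℕ}
    (hρ : 0 < ρ) (hA : 0 < A) (hG : IsG p ρ G A m) :
    ∀ i : ℕ, IsG p ρ (G ^ i) (A ^ i) (i * m) := by
  intro i
  induction i with
  | zero => simpa using isG_one (p := p) hρ
  | succ i ih =>
      have := isG_mul hρ (pow_pos hA i) hA ih hG
      rw [← pow_succ, ← pow_succ] at this
      have hm : i * m + m = (i + 1) * m := by ring
      rwa [hm] at this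

lemma isG_of_tendsto {ρ : ℝ} (hρ : 0 < ρ) {G : PowerSeries ℚ}
    (hne : ∃ n, PowerSeries.coeff n G ≠ 0)
    (hlim : Tendsto (fun n => (padicNorm p (PowerSeries.coeff n G) : ℝ) * ρ ^ n)
      atTop (nhds 0)) :
    ∃ A m, 0 < A ∧ IsG p ρ G A m := by
  obtain ⟨n0, hn0⟩ := hne
  have hpos : ∃ n, 0 < (padicNorm p (PowerSeries.coeff n G) : ℝ) * ρ ^ n :=
    ⟨n0, mul_pos (padic_pos_of_ne hn0) (pow_pos hρ n0)⟩
  have h0 : ∀ n, 0 ≤ (padicNorm p (PowerSeries.coeff n G) : ℝ) * ρ ^ n := fun n =>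
    mul_nonneg (by exact_mod_cast padicNorm.nonneg _) (pow_pos hρ n).le
  obtain ⟨m, hmax, hmin⟩ := exists_argmax_min _ h0 hlim hpos
  obtain ⟨n1, hn1⟩ := hpos
  exact ⟨_, m, lt_of_lt_of_le hn1 (hmax n1), hmax, rfl, hmin⟩

lemma isG_poly {ρ : ℝ} (hρ0 : 0 < ρ) {Q : Polynomial ℚ} (hQ : Q ≠ 0) :
    ∃ A m, 0 < A ∧ IsG p ρ (↑Q : PowerSeries ℚ) A m := by
  refine isG_of_tendsto hρ0 ?_ ?_
  · refine ⟨Q.natDegree, ?_⟩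
    rw [Polynomial.coeff_coe]
    exact Polynomial.leadingCoeff_ne_zero.2 hQ
  · have hev : (fun n => (padicNorm p (PowerSeries.coeff n (↑Q : PowerSeries ℚ)) : ℝ) * ρ ^ n)
        =ᶠ[atTop] (fun _ => (0:ℝ)) := by
      refine eventually_atTop.2 ⟨Q.natDegree + 1, fun n hn => ?_⟩
      simp only [Polynomial.coeff_coe]
      rw [Polynomial.coeff_eq_zero_of_natDegree_lt (by omega)]
      simp [padicNorm.zero]
    exact (tendsto_congr' hev).2 tendsto_const_nhds

end Aux
open Filter in
/-- Let `p` be prime and `F(z) = ∑_{n≥1} f(n) zⁿ ∈ ℚ[[z]]` algebraic over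
`ℚ(z)`. If for every `0 < ρ < 1` the sequence `|f(n)|_p ρⁿ → 0`, then `|f(n)|_p` is
uniformly bounded. -/
theorem padic_bounded_of_algebraic_convergent
    (p : ℕ) (hp : p.Prime)
    (f : ℕ → ℚ)
    (halg : ∃ (r : ℕ) (P : ℕ → Polynomial ℚ), (∃ i ≤ r, P i ≠ 0) ∧
      ∑ i ∈ Finset.range (r + 1),
        (P i : PowerSeries ℚ) * (PowerSeries.mk fun n => if n = 0 then 0 else f n) ^ i = 0)
    (hconv : ∀ ρ : ℝ, 0 < ρ → ρ < 1 →
      Tendsto (fun n : ℕ => (padicNorm p (f n) : ℝ) * ρ ^ n) atTop (nhds 0)) :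
    ∃ C : ℝ, ∀ n : ℕ, 1 ≤ n → (padicNorm p (f n) : ℝ) ≤ C := by
  haveI : Fact p.Prime := ⟨hp⟩
  classical
  by_cases htriv : ∀ n : ℕ, 1 ≤ n → f n = 0
  · refine ⟨0, fun n hn => ?_⟩
    rw [htriv n hn]
    simp [padicNorm.zero]
  push_neg at htriv
  obtain ⟨n1, hn11, hn1⟩ := htriv
  obtain ⟨r, P, ⟨i₀, hi₀r, hPi₀⟩, heq⟩ := halg
  set F : PowerSeries ℚ := PowerSeries.mk fun n => if n = 0 then 0 else f n with hF
  have hcoeff : ∀ n, PowerSeries.coeff n F = if n = 0 then 0 else f n := fun n =>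
    PowerSeries.coeff_mk _ _
  have nneg : ∀ q : ℚ, (0:ℝ) ≤ (padicNorm p q : ℝ) := fun q => by
    exact_mod_cast padicNorm.nonneg q
  -- the global constants
  set M : ℕ → ℝ := fun i =>
    ∑ k ∈ Finset.range ((P i).natDegree + 1), (padicNorm p ((P i).coeff k) : ℝ) with hM
  set c : ℕ → ℝ := fun j =>
    (padicNorm p ((P j).coeff (P j).natDegree) : ℝ) * (1/2 : ℝ) ^ (P j).natDegree with hc
  set C0 : ℝ := 1 + ∑ i ∈ Finset.range (r+1), ∑ j ∈ Finset.range (r+1), M i / c j with hC0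
  have hMnn : ∀ i, 0 ≤ M i := fun i => Finset.sum_nonneg fun k _ => nneg _
  have hcnn : ∀ j, 0 ≤ c j := fun j => mul_nonneg (nneg _) (by positivity)
  have hC01 : (1:ℝ) ≤ C0 := by
    have : (0:ℝ) ≤ ∑ i ∈ Finset.range (r+1), ∑ j ∈ Finset.range (r+1), M i / c j :=
      Finset.sum_nonneg fun i _ => Finset.sum_nonneg fun j _ => div_nonneg (hMnn i) (hcnn j)
    rw [hC0]
    linarith
  have hC0ij : ∀ i ∈ Finset.range (r+1), ∀ j ∈ Finset.range (r+1), M i / c j ≤ C0 := by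
    intro i hi j hj
    have t1 : M i / c j ≤ ∑ j' ∈ Finset.range (r+1), M i / c j' :=
      Finset.single_le_sum (fun j' _ => div_nonneg (hMnn i) (hcnn j')) hj
    have t2 : (∑ j' ∈ Finset.range (r+1), M i / c j') ≤
        ∑ i' ∈ Finset.range (r+1), ∑ j' ∈ Finset.range (r+1), M i' / c j' :=
      Finset.single_le_sum
        (fun i' _ => Finset.sum_nonneg fun j' _ => div_nonneg (hMnn i') (hcnn j')) hi
    rw [hC0]; linarith
  -- the main uniform bound for each radius ρ ∈ (1/2, 1)
  have main : ∀ ρ : ℝ, 1/2 < ρ → ρ < 1 → ∀ n, 1 ≤ n →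
      (padicNorm p (f n) : ℝ) * ρ ^ n ≤ C0 := by
    intro ρ hρh hρ1
    have hρ0 : (0:ℝ) < ρ := lt_trans (by norm_num) hρh
    -- a Gauss norm for F
    have hlimF : Tendsto (fun n => (padicNorm p (PowerSeries.coeff n F) : ℝ) * ρ ^ n)
        atTop (nhds 0) := by
      refine (hconv ρ hρ0 hρ1).congr' ?_
      refine eventually_atTop.2 ⟨1, fun k hk => ?_⟩
      simp only
      rw [hcoeff, if_neg (by omega)]
    obtain ⟨A, m, hApos, hFA⟩ := isG_of_tendsto (p := p) hρ0
      ⟨n1, by rw [hcoeff, if_neg (by omega)]; exact hn1⟩ hlimF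
    -- Gauss norms for the nonzero coefficient polynomials
    have hPiso : ∀ i, ∃ Ai mi, P i ≠ 0 → (0 < Ai ∧ IsG p ρ (↑(P i)) Ai mi) := by
      intro i
      by_cases h : P i = 0
      · exact ⟨1, 0, fun h' => absurd h h'⟩
      · obtain ⟨Ai, mi, h1, h2⟩ := isG_poly (p := p) hρ0 h
        exact ⟨Ai, mi, fun _ => ⟨h1, h2⟩⟩
    choose Aq mq hq using hPiso
    set s : Finset ℕ := (Finset.range (r+1)).filter (fun i => P i ≠ 0) with hs
    have hsne : s.Nonempty :=
      ⟨i₀, Finset.mem_filter.2 ⟨Finset.mem_range.2 (by omega), hPi₀⟩⟩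
    set B : ℕ → ℝ := fun i => Aq i * A ^ i with hB
    have hterm : ∀ i ∈ s, IsG p ρ ((↑(P i) : PowerSeries ℚ) * F ^ i) (B i) (mq i + i * m) := by
      intro i hi
      have hPi : P i ≠ 0 := (Finset.mem_filter.1 hi).2
      exact isG_mul hρ0 (hq i hPi).1 (pow_pos hApos i) (hq i hPi).2 (isG_pow hρ0 hApos hFA i)
    have hBpos : ∀ i ∈ s, 0 < B i := fun i hi =>
      mul_pos (hq i (Finset.mem_filter.1 hi).2).1 (pow_pos hApos i)
    -- two terms must have equal Gauss norm
    have tie : ∃ i ∈ s, ∃ j ∈ s, i ≠ j ∧ B i = B j := by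
      by_contra hcon
      push_neg at hcon
      obtain ⟨i0, hi0, hmax⟩ := Finset.exists_max_image s B hsne
      have hstrict : ∀ j ∈ s, j ≠ i0 → B j < B i0 := fun j hj hne =>
        lt_of_le_of_ne (hmax j hj) (hcon j hj i0 hi0 hne)
      set n0 : ℕ := mq i0 + i0 * m with hn0
      have hterm0 := hterm i0 hi0
      have hB0 := hBpos i0 hi0
      have hval0 : (padicNorm p (PowerSeries.coeff n0 ((↑(P i0) : PowerSeries ℚ) * F ^ i0)) : ℝ)
          * ρ ^ n0 = B i0 := hterm0.2.1
      have hpos0 : (0:ℝ) <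
          (padicNorm p (PowerSeries.coeff n0 ((↑(P i0) : PowerSeries ℚ) * F ^ i0)) : ℝ) := by
        by_contra hle
        push_neg at hle
        have : (padicNorm p (PowerSeries.coeff n0 ((↑(P i0) : PowerSeries ℚ) * F ^ i0)) : ℝ)
            = 0 := le_antisymm hle (nneg _)
        rw [this, zero_mul] at hval0
        exact absurd hval0.symm (ne_of_gt hB0)
      have hzero : (∑ i ∈ Finset.range (r+1),
          PowerSeries.coeff n0 ((↑(P i) : PowerSeries ℚ) * F ^ i)) = 0 := by
        rw [← map_sum, heq, map_zero]
      have hdom : padicNorm p (∑ i ∈ Finset.range (r+1),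
            PowerSeries.coeff n0 ((↑(P i) : PowerSeries ℚ) * F ^ i)) =
          padicNorm p (PowerSeries.coeff n0 ((↑(P i0) : PowerSeries ℚ) * F ^ i0)) := by
        refine padic_sum_dominant _ _ (Finset.mem_filter.1 hi0).1 ?_
        intro i hi hne
        by_cases hPi : P i = 0
        · simp only [hPi, Polynomial.coe_zero, zero_mul, map_zero, padicNorm.zero]
          exact_mod_cast hpos0
        · have his : i ∈ s := Finset.mem_filter.2 ⟨hi, hPi⟩
          have h1 : (padicNorm p (PowerSeries.coeff n0 ((↑(P i) : PowerSeries ℚ) * F ^ i)) : ℝ)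
              * ρ ^ n0 ≤ B i := (hterm i his).1 n0
          have h2 : B i < B i0 := hstrict i his hne
          have := lt_of_le_of_lt h1 h2
          rw [← hval0] at this
          exact (mul_lt_mul_iff_of_pos_right (pow_pos hρ0 n0)).1 this
      rw [hzero, padicNorm.zero] at hdom
      have : (0:ℝ) =
          (padicNorm p (PowerSeries.coeff n0 ((↑(P i0) : PowerSeries ℚ) * F ^ i0)) : ℝ) := by
        exact_mod_cast hdom
      rw [← this] at hpos0
      exact lt_irrefl _ hpos0
    -- from the tie, bound A
    have key : ∀ i ∈ s, ∀ j ∈ s, i < j → B i = B j → A ≤ C0 := by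
      intro i hi j hj hij hBij
      have hPi : P i ≠ 0 := (Finset.mem_filter.1 hi).2
      have hPj : P j ≠ 0 := (Finset.mem_filter.1 hj).2
      obtain ⟨hAi, hGi⟩ := hq i hPi
      obtain ⟨hAj, hGj⟩ := hq j hPj
      -- A ^ (j - i) = Aq i / Aq j
      have h1 : Aq i * A ^ i = Aq j * A ^ (j - i) * A ^ i := by
        have : Aq i * A ^ i = Aq j * A ^ j := hBij
        rw [this, mul_assoc, ← pow_add]
        congr 2
        omega
      have h2 : Aq i = Aq j * A ^ (j - i) := mul_right_cancel₀ (pow_ne_zero i hApos.ne') h1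
      -- Aq i ≤ M i
      have hAqiM : Aq i ≤ M i := by
        have he := hGi.2.1
        rw [Polynomial.coeff_coe] at he
        have hcne : (P i).coeff (mq i) ≠ 0 := by
          intro h0
          rw [h0, padicNorm.zero] at he
          simp at he
          exact absurd he.symm (ne_of_gt hAi)
        have hdeg : mq i ≤ (P i).natDegree := Polynomial.le_natDegree_of_ne_zero hcne
        have hle1 : Aq i ≤ (padicNorm p ((P i).coeff (mq i)) : ℝ) := by
          rw [← he]
          exact mul_le_of_le_one_right (nneg _) (pow_le_one₀ hρ0.le hρ1.le)
        refine le_trans hle1 ?_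
        exact Finset.single_le_sum (fun k _ => nneg ((P i).coeff k))
          (Finset.mem_range.2 (by omega))
      -- 0 < c j ≤ Aq j
      have hlead : (P j).coeff (P j).natDegree ≠ 0 := by
        rw [← Polynomial.leadingCoeff]
        exact Polynomial.leadingCoeff_ne_zero.2 hPj
      have hcjpos : 0 < c j := mul_pos (padic_pos_of_ne hlead) (by positivity)
      have hcjle : c j ≤ Aq j := by
        have hle2 : (padicNorm p ((P j).coeff (P j).natDegree) : ℝ) * ρ ^ (P j).natDegree
            ≤ Aq j := by
          have := hGj.1 (P j).natDegree
          rwa [Polynomial.coeff_coe] at this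
        refine le_trans ?_ hle2
        exact mul_le_mul_of_nonneg_left
          (pow_le_pow_left₀ (by norm_num) hρh.le (P j).natDegree) (nneg _)
      have h3 : A ^ (j - i) = Aq i / Aq j := by
        rw [h2, mul_comm, mul_div_assoc, div_self hAj.ne', mul_one]
      have h4 : A ^ (j - i) ≤ M i / c j := by
        rw [h3]
        exact div_le_div₀ (hMnn i) hAqiM hcjpos hcjle
      rcases le_or_gt A 1 with hA1 | hA1
      · exact le_trans hA1 hC01
      · have h5 : A ≤ A ^ (j - i) := le_self_pow₀ hA1.le (by omega)
        exact le_trans h5 (le_trans h4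
          (hC0ij i (Finset.mem_filter.1 hi).1 j (Finset.mem_filter.1 hj).1))
    have hAC0 : A ≤ C0 := by
      obtain ⟨i, hi, j, hj, hij, hBij⟩ := tie
      rcases lt_or_gt_of_ne hij with h | h
      · exact key i hi j hj h hBij
      · exact key j hj i hi h hBij.symm
    intro n hn
    have := hFA.1 n
    rw [hcoeff, if_neg (by omega)] at this
    exact le_trans this hAC0
  -- let ρ → 1
  refine ⟨C0, fun n hn => ?_⟩
  set ρk : ℕ → ℝ := fun k => 1 - ((k:ℝ) + 4)⁻¹ with hρk
  have hk4 : ∀ k : ℕ, (0:ℝ) < (k:ℝ) + 4 := fun k => by positivity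
  have h1 : ∀ k, 1/2 < ρk k := by
    intro k
    have : ((k:ℝ) + 4)⁻¹ ≤ 1/4 := by
      rw [inv_le_iff_one_le_mul₀ (hk4 k)]
      · linarith [Nat.cast_nonneg (α := ℝ) k]
    simp only [hρk]
    linarith
  have h2 : ∀ k, ρk k < 1 := by
    intro k
    have : (0:ℝ) < ((k:ℝ) + 4)⁻¹ := inv_pos.2 (hk4 k)
    simp only [hρk]
    linarith
  have hb : ∀ k, (padicNorm p (f n) : ℝ) * (ρk k) ^ n ≤ C0 := fun k =>
    main _ (h1 k) (h2 k) n hn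
  have hlim : Tendsto ρk atTop (nhds 1) := by
    have ht : Tendsto (fun k : ℕ => ((k:ℝ) + 4)) atTop atTop :=
      tendsto_atTop_add_const_right _ 4 tendsto_natCast_atTop_atTop
    have h0 : Tendsto (fun k : ℕ => ((k:ℝ) + 4)⁻¹) atTop (nhds 0) := ht.inv_tendsto_atTop
    have := h0.const_sub (1:ℝ)
    simpa using this
  have hlim2 : Tendsto (fun k => (padicNorm p (f n) : ℝ) * (ρk k) ^ n) atTop
      (nhds ((padicNorm p (f n) : ℝ))) := by
    have := (hlim.pow n).const_mul ((padicNorm p (f n) : ℝ))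
    simpa using this
  exact le_of_tendsto' hlim2 hb
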